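/- For every integer t ≥ 2 with t not congruent to 1 mod 3, there exist infinitely many primes p of the form p = (2t+1)m + (t+2) with m ≥ 2, and every such prime is 3-representable. -/

import Mathlib

def IsRepr3 (n : ℕ) : Prop :=
  ∃ x₁ x₂ x₃ : ℕ, 1 ≤ x₁ ∧ x₁ ≤ x₂ ∧ x₂ ≤ x₃ ∧
    n = x₁ * x₂ * x₃ + x₁ + x₂ + x₃

theorem stmt_8 (t : ℕ) (ht : 2 ≤ t) (ht3 : t % 3 ≠ 1) :
    {p : ℕ | p.Prime ∧ ∃ m : ℕ, 2 ≤ m ∧ p = (2 * t + 1) * m + (t + 2)}.Infinite ∧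
    ∀ p : ℕ, p.Prime → (∃ m : ℕ, 2 ≤ m ∧ p = (2 * t + 1) * m + (t + 2)) →
      IsRepr3 p := by
  constructor
  · -- Infinitude via Dirichlet
    have hq : NeZero (2 * t + 1) := ⟨by omega⟩
    have hcop : Nat.Coprime (t + 2) (2 * t + 1) := by
      have hd1 : Nat.gcd (t + 2) (2 * t + 1) ∣ t + 2 := Nat.gcd_dvd_left _ _
      have hd2 : Nat.gcd (t + 2) (2 * t + 1) ∣ 2 * t + 1 := Nat.gcd_dvd_right _ _
      have hd3 : Nat.gcd (t + 2) (2 * t + 1) ∣ 3 := by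
        have := Nat.dvd_sub (Dvd.dvd.mul_left hd1 2) hd2
        simpa [show 2 * (t + 2) - (2 * t + 1) = 3 by omega] using this
      have h3 : Nat.gcd (t + 2) (2 * t + 1) = 1 ∨ Nat.gcd (t + 2) (2 * t + 1) = 3 :=
        (Nat.le_of_dvd (by norm_num) hd3).lt_or_eq.elim
          (fun h => by interval_cases h' : Nat.gcd (t + 2) (2 * t + 1) <;> omega)
          (fun h => Or.inr h)
      rcases h3 with h | h
      · exact h
      · exfalso
        rw [h] at hd1
        obtain ⟨k, hk⟩ := hd1
        omega
    have hu : IsUnit ((t + 2 : ℕ) : ZMod (2 * t + 1)) :=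
      (ZMod.isUnit_iff_coprime _ _).mpr hcop
    have hinf := Nat.infinite_setOfPred_prime_and_eq_mod (q := 2 * t + 1) hu
    have hfin : ({p : ℕ | p ≤ 5 * t + 3}).Finite := Set.finite_le_nat _
    refine ((hinf.diff hfin).mono ?_)
    rintro p ⟨⟨hp, hcast⟩, hbig⟩
    simp only [Set.mem_setOf_eq, not_le] at hbig
    refine ⟨hp, p / (2 * t + 1), ?_, ?_⟩
    · by_contra hm
      push_neg at hm
      have h1 : p / (2 * t + 1) ≤ 1 := by omega
      have h2 : p % (2 * t + 1) < 2 * t + 1 := Nat.mod_lt _ (by omega)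
      have := Nat.div_add_mod p (2 * t + 1)
      have : (2 * t + 1) * (p / (2 * t + 1)) ≤ (2 * t + 1) * 1 :=
        Nat.mul_le_mul_left _ h1
      omega
    · have hmod : p % (2 * t + 1) = (t + 2) % (2 * t + 1) :=
        (ZMod.natCast_eq_natCast_iff' _ _ _).mp hcast
      have h2 : (t + 2) % (2 * t + 1) = t + 2 := Nat.mod_eq_of_lt (by omega)
      have := Nat.div_add_mod p (2 * t + 1)
      omega
  · -- every such prime is 3-representable
    rintro p hp ⟨m, hm, rfl⟩
    refine ⟨2, min t m, max t m, by norm_num, by omega, by omega, ?_⟩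
    rcases le_total t m with h | h
    · simp only [min_eq_left h, max_eq_right h]; ring
    · simp only [min_eq_right h, max_eq_left h]; ring
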